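/- Let d ≥ 1, let Σ be a d×d real symmetric positive definite matrix, and let X be a d×d real symmetric positive definite matrix with det X = 1 such that (Σ^{1/2} R Σ^{-1/2}) X (Σ^{1/2} R Σ^{-1/2})ᵀ = X for every R ∈ SO(d). Then X = (det Σ)^{-1/d} • Σ. In other words, the normalized matrix Σ̄ = (det Σ)^{-1/d} Σ is the unique determinant-one positive definite matrix fixed by the group H_Σ. -/

import Mathlib

open Matrix
open scoped Classical

/-- The positive semidefinite square root of a matrix, extended to a total function
(junk value `0` when the matrix is not positive semidefinite). -/

noncomputable def matSqrt {d : ℕ} (A : Matrix (Fin d) (Fin d) ℝ) : Matrix (Fin d) (Fin d) ℝ :=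
  if hA : A.PosSemidef then
    hA.1.eigenvectorUnitary.1 * diagonal ((↑) ∘ (√·) ∘ hA.1.eigenvalues) *
      (star hA.1.eigenvectorUnitary : Matrix (Fin d) (Fin d) ℝ)
  else 0

/-- key scalar lemma: a symmetric matrix fixed by conjugation by all SO(d) -/
lemma fixed_entries (d : ℕ) (Y : Matrix (Fin d) (Fin d) ℝ) (hY : Yᵀ = Y)
    (hfixY : ∀ R : Matrix (Fin d) (Fin d) ℝ, R * Rᵀ = 1 → R.det = 1 → R * Y * Rᵀ = Y)
    (i j : Fin d) (hij : i ≠ j) : Y j j = Y i i ∧ Y i j = 0 := by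
  set σ : Equiv.Perm (Fin d) := Equiv.swap i j with hσ
  set ε : Fin d → ℝ := fun k => if k = i then -1 else 1 with hε
  set P : Matrix (Fin d) (Fin d) ℝ := σ.toPEquiv.toMatrix with hP
  set R : Matrix (Fin d) (Fin d) ℝ := Matrix.diagonal ε * P with hR
  have hPt : Pᵀ = σ.symm.toPEquiv.toMatrix := by
    rw [hP, ← PEquiv.toMatrix_symm, Equiv.toPEquiv_symm]
  have hPP : P * Pᵀ = 1 := by
    rw [hPt, hP, ← PEquiv.toMatrix_trans, ← Equiv.toPEquiv_trans]
    simp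
  have hRR : R * Rᵀ = 1 := by
    rw [hR, Matrix.transpose_mul, Matrix.diagonal_transpose]
    calc Matrix.diagonal ε * P * (Pᵀ * Matrix.diagonal ε)
        = Matrix.diagonal ε * (P * Pᵀ) * Matrix.diagonal ε := by
          simp [Matrix.mul_assoc]
      _ = 1 := by
          rw [hPP, Matrix.mul_one, Matrix.diagonal_mul_diagonal]
          have hee : (fun k => ε k * ε k) = (fun _ => (1:ℝ)) := by
            funext k; by_cases hk : k = i <;> simp [hε, hk]
          rw [hee, Matrix.diagonal_one]
  have hdetR : R.det = 1 := by
    rw [hR, Matrix.det_mul, Matrix.det_diagonal]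
    have h1 : ∏ k, ε k = -1 := by
      rw [Finset.prod_eq_single i]
      · simp [hε]
      · intro b _ hb; simp [hε, hb]
      · simp
    have h2 : P.det = -1 := by
      have := Matrix.det_permutation (R := ℝ) (σ := σ)
      rw [hP]
      rw [Equiv.Perm.permMatrix] at this
      rw [this, hσ, Equiv.Perm.sign_swap hij]
      simp
    rw [h1, h2]; ring
  have key := hfixY R hRR hdetR
  -- rewrite R * Y * Rᵀ as entries
  have hexp : ∀ a b, ε a * Y (σ a) (σ b) * ε b = Y a b := by
    intro a b
    have : (R * Y * Rᵀ) a b = Y a b := by rw [key]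
    rw [hR, Matrix.transpose_mul, Matrix.diagonal_transpose, hPt] at this
    have e1 : Matrix.diagonal ε * P * Y * (Pᵀ * Matrix.diagonal ε)
        = Matrix.diagonal ε * (P * Y * Pᵀ) * Matrix.diagonal ε := by
      simp [Matrix.mul_assoc]
    rw [hPt] at e1
    rw [e1] at this
    have e2 : P * Y * Pᵀ = Y.submatrix σ σ := by
      rw [hPt, hP, PEquiv.toMatrix_toPEquiv_mul, PEquiv.mul_toMatrix_toPEquiv]
      ext a b
      simp [Matrix.submatrix_apply]
    rw [hPt] at e2
    rw [e2] at this
    simp only [Matrix.mul_diagonal, Matrix.diagonal_mul, Matrix.submatrix_apply] at this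
    simpa [mul_comm, mul_assoc, mul_left_comm] using this
  constructor
  · have := hexp j j
    simp [hε, hσ, hij, Ne.symm hij, Equiv.swap_apply_right] at this
    exact this.symm
  · have h1 := hexp i j
    simp [hε, hσ, hij, Ne.symm hij, Equiv.swap_apply_left, Equiv.swap_apply_right] at h1
    have hsym : Y i j = Y j i := by
      have h2 := congrFun (congrFun hY j) i
      simpa [Matrix.transpose_apply] using h2
    rw [← hsym] at h1
    linarith

lemma posdef_diag_pos {d : ℕ} {M : Matrix (Fin d) (Fin d) ℝ} (hM : M.PosDef) (k : Fin d) :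
    0 < M k k := by
  exact hM.diag_pos

/-- If a real symmetric positive definite `d × d` matrix `X` with `det X = 1`
is fixed by the action `G · X = G X Gᵀ` of every `G = Σ^{1/2} R Σ^{-1/2}` with `R ∈ SO(d)`,
then `X = (det Σ)^{-1/d} • Σ`, i.e. `X` is the determinant-one normalization of `Σ`. -/
theorem unique_detOne_fixed_point (d : ℕ) (hd : 1 ≤ d)
    (S X : Matrix (Fin d) (Fin d) ℝ) (hS : S.PosDef) (hX : X.PosDef) (hdet : X.det = 1)
    (hfix : ∀ R : Matrix (Fin d) (Fin d) ℝ, R * Rᵀ = 1 → R.det = 1 →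
      (matSqrt S * R * (matSqrt S)⁻¹) * X * (matSqrt S * R * (matSqrt S)⁻¹)ᵀ = X) :
    X = (S.det ^ (-(1 : ℝ) / d)) • S := by
  have hSps := hS.posSemidef
  have hAdef : matSqrt S = hSps.1.eigenvectorUnitary.1 * diagonal ((↑) ∘ (√·) ∘ hSps.1.eigenvalues) *
      (star hSps.1.eigenvectorUnitary : Matrix (Fin d) (Fin d) ℝ) := dif_pos hSps
  set A := matSqrt S with hA
  have hAA : A * A = S := by
    rw [hAdef]
    conv_rhs => rw [hSps.1.spectral_theorem]
    have hU : (star hSps.1.eigenvectorUnitary : Matrix (Fin d) (Fin d) ℝ) * hSps.1.eigenvectorUnitary.1 = 1 :=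
      Unitary.star_mul_self_of_mem hSps.1.eigenvectorUnitary.2
    rw [Unitary.conjStarAlgAut_apply]
    simp only [Matrix.mul_assoc]
    rw [← Matrix.mul_assoc _ _ (diagonal _ * _), hU, Matrix.one_mul, ← Matrix.mul_assoc (diagonal _), diagonal_mul_diagonal]
    congr 3
    funext k
    simp [Real.mul_self_sqrt (hSps.eigenvalues_nonneg k)]
  have hAsym : Aᵀ = A := by
    rw [← Matrix.conjTranspose_eq_transpose_of_trivial, hAdef]
    simp [Matrix.star_eq_conjTranspose, Matrix.mul_assoc]
  have hdS : 0 < S.det := hS.det_pos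
  have hdA : IsUnit A.det := by
    rw [isUnit_iff_ne_zero]
    intro h0
    have : S.det = 0 := by rw [← hAA, Matrix.det_mul, h0, mul_zero]
    exact hdS.ne' this
  have hAinv : (A⁻¹)ᵀ = A⁻¹ := by rw [Matrix.transpose_nonsing_inv, hAsym]
  have hXsym : Xᵀ = X := by
    rw [← Matrix.conjTranspose_eq_transpose_of_trivial]; exact hX.1
  set Y := A⁻¹ * X * A⁻¹ with hYdef
  have hYsym : Yᵀ = Y := by
    rw [hYdef, Matrix.transpose_mul, Matrix.transpose_mul, hAinv, hXsym, Matrix.mul_assoc]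
  have hYfix : ∀ R : Matrix (Fin d) (Fin d) ℝ, R * Rᵀ = 1 → R.det = 1 →
      R * Y * Rᵀ = Y := by
    intro R h1 h2
    have h := hfix R h1 h2
    have hT : (A * R * A⁻¹)ᵀ = A⁻¹ * Rᵀ * A := by
      rw [Matrix.transpose_mul, Matrix.transpose_mul, hAinv, hAsym, Matrix.mul_assoc]
    rw [hT] at h
    calc R * Y * Rᵀ
        = A⁻¹ * (A * R * A⁻¹ * X * (A⁻¹ * Rᵀ * A)) * A⁻¹ := by
          simp only [hYdef, Matrix.mul_assoc, Matrix.nonsing_inv_mul_cancel_left _ _ hdA,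
            Matrix.mul_nonsing_inv A hdA, Matrix.mul_one]
      _ = Y := by rw [h, hYdef]
  set i0 : Fin d := ⟨0, hd⟩ with hi0
  set c : ℝ := Y i0 i0 with hc
  have hYeq : Y = c • (1 : Matrix (Fin d) (Fin d) ℝ) := by
    ext a b
    by_cases hab : a = b
    · subst hab
      by_cases ha : a = i0
      · subst ha; simp [hc]
      · have := (fixed_entries d Y hYsym hYfix i0 a (fun h => ha h.symm)).1
        simp [this, hc]
    · have := (fixed_entries d Y hYsym hYfix a b hab).2
      simp [this, Matrix.one_apply_ne hab]
  have hXeq : X = c • S := by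
    have : A * Y * A = X := by
      simp only [hYdef, Matrix.mul_assoc, Matrix.mul_nonsing_inv_cancel_left _ _ hdA,
        Matrix.nonsing_inv_mul A hdA, Matrix.mul_one]
    rw [← this, hYeq]
    rw [Matrix.mul_smul, Matrix.smul_mul, Matrix.mul_one, hAA]
  have hcpos : 0 < c := by
    have h1 := posdef_diag_pos hX i0
    have h2 := posdef_diag_pos hS i0
    rw [hXeq] at h1
    simp only [Matrix.smul_apply, smul_eq_mul] at h1
    by_contra hle
    push_neg at hle
    nlinarith [h1, h2]
  have hcd : c ^ d * S.det = 1 := by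
    rw [← hdet, hXeq, Matrix.det_smul, Fintype.card_fin]
  have hd0 : (d : ℝ) ≠ 0 := Nat.cast_ne_zero.2 (by omega)
  have hcval : S.det ^ (-(1 : ℝ) / d) = c := by
    have hinv : S.det⁻¹ = c ^ d := by
      field_simp at hcd ⊢
      linarith [hcd]
    rw [neg_div, Real.rpow_neg hdS.le, ← Real.inv_rpow hdS.le, hinv,
      ← Real.rpow_natCast c d, ← Real.rpow_mul hcpos.le, mul_one_div, div_self hd0,
      Real.rpow_one]
  rw [hXeq, hcval]
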